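/- arXiv:2402.12218 — 3 statements merged into one kernel-verified Lean document; each statement's English description precedes it below -/
import Mathlib

section
/- Let ℓ be a prime with ℓ ≡ 1 (mod 12) and let p be any rational prime. Then the polynomial X⁴ + pX² + p², with its coefficients reduced modulo ℓ, splits into a product of linear factors in F_ℓ[X] if and only if the Legendre symbol (p/ℓ) ≠ −1. -/
open Polynomial

/-- Let `ℓ` be a prime with `ℓ ≡ 1 (mod 12)` and let `p` be any rational
prime. Then the polynomial `X⁴ + pX² + p²`, with its coefficients reduced modulo `ℓ`, splits
into a product of linear factors in `F_ℓ[X]` if and only if the Legendre symbol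
`(p/ℓ) ≠ −1` (here expressed via the Jacobi symbol, which coincides with the Legendre
symbol for primes). -/
theorem split_linear_iff_legendre_ne_neg_one_case1
    (ℓ : ℕ) [Fact ℓ.Prime] (h12 : ℓ % 12 = 1) (p : ℕ) (hp : p.Prime) :
    Polynomial.Splits ((X ^ 4 + C (p : ZMod ℓ) * X ^ 2 + C ((p : ZMod ℓ) ^ 2)).map
      (RingHom.id (ZMod ℓ)))
      ↔ jacobiSym p ℓ ≠ -1 := by
  have hℓ13 : 13 ≤ ℓ := by
    rcases Nat.lt_or_ge ℓ 13 with h | h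
    · interval_cases ℓ <;> simp_all (config := {decide := true}) [Nat.Prime]
    · exact h
  -- reduce RHS to IsSquare
  have hiff : (jacobiSym p ℓ ≠ -1) ↔ IsSquare ((p : ZMod ℓ)) := by
    rw [← jacobiSym.legendreSym.to_jacobiSym ℓ p, ne_eq, legendreSym.eq_neg_one_iff, not_not,
      Int.cast_natCast]
  rw [hiff, Polynomial.map_id]
  -- -3 is a square mod ℓ
  have hm3 : IsSquare (-3 : ZMod ℓ) := by
    have h1 : IsSquare (-1 : ZMod ℓ) := (ZMod.exists_sq_eq_neg_one_iff).2 (by omega)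
    have h2 : IsSquare (3 : ZMod ℓ) := by
      have := (ZMod.exists_sq_eq_prime_iff_of_mod_four_eq_one (p := ℓ) (q := 3)
        (by omega) (by norm_num)).2
      have hsq : IsSquare ((ℓ : ZMod 3)) := by
        rw [show ((ℓ : ZMod 3)) = ((ℓ % 3 : ℕ) : ZMod 3) from (ZMod.natCast_mod ℓ 3).symm,
          show ℓ % 3 = 1 by omega]
        exact IsSquare.one
      simpa using this hsq
    simpa using h1.mul h2
  -- a primitive sixth root of unity ζ, satisfying ζ² = ζ - 1
  obtain ⟨ζ, hζ⟩ : ∃ z : ZMod ℓ, z ^ 2 = z - 1 := by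
    obtain ⟨r, hr⟩ := hm3
    have hr2 : r ^ 2 = -3 := by rw [sq]; exact hr.symm
    have h2ne : (2 : ZMod ℓ) ≠ 0 := by
      have : ((2 : ℕ) : ZMod ℓ) ≠ 0 := by
        rw [Ne, ZMod.natCast_eq_zero_iff]
        intro h
        have := Nat.le_of_dvd (by norm_num) h
        omega
      simpa using this
    refine ⟨(1 + r) * (2 : ZMod ℓ)⁻¹, ?_⟩
    field_simp
    linear_combination hr2
  have hζne : ζ ≠ 0 := by
    intro h
    rw [h] at hζ
    have : (1 : ZMod ℓ) = 0 := by linear_combination hζ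
    exact one_ne_zero this
  set q : ZMod ℓ := (p : ZMod ℓ) with hq
  have hsum : ζ ^ 2 + (ζ ^ 2) ^ 2 = -1 := by linear_combination (ζ ^ 2 + ζ + 1) * hζ
  have hprod : ζ ^ 2 * (ζ ^ 2) ^ 2 = 1 := by
    linear_combination (ζ ^ 4 + ζ ^ 3 - ζ - 1) * hζ
  -- the key factorization
  have key : (X ^ 4 + C q * X ^ 2 + C (q ^ 2) : (ZMod ℓ)[X])
      = (X ^ 2 - C (q * ζ ^ 2)) * (X ^ 2 - C (q * (ζ ^ 2) ^ 2)) := by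
    have h1 : q * ζ ^ 2 + q * (ζ ^ 2) ^ 2 = -q := by linear_combination q * hsum
    have h2 : (q * ζ ^ 2) * (q * (ζ ^ 2) ^ 2) = q ^ 2 := by linear_combination q ^ 2 * hprod
    have expand : (X ^ 2 - C (q * ζ ^ 2)) * (X ^ 2 - C (q * (ζ ^ 2) ^ 2))
        = X ^ 4 - C (q * ζ ^ 2 + q * (ζ ^ 2) ^ 2) * X ^ 2
          + C ((q * ζ ^ 2) * (q * (ζ ^ 2) ^ 2)) := by
      simp only [C_add, C_mul]
      ring
    rw [expand, h1, h2, C_neg]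
    ring
  constructor
  · -- splits → IsSquare
    intro hsplit
    by_contra hnsq
    have hdeg : (X ^ 4 + C q * X ^ 2 + C (q ^ 2) : (ZMod ℓ)[X]).degree ≠ 0 := by
      have : (X ^ 4 + C q * X ^ 2 + C (q ^ 2) : (ZMod ℓ)[X]).degree = 4 := by
        compute_degree!
      rw [this]; norm_num
    obtain ⟨x, hx⟩ := Polynomial.Splits.exists_eval_eq_zero hsplit hdeg
    simp only [eval_add, eval_mul, eval_pow, eval_X, eval_C] at hx
    have hx' : (x ^ 2 - q * ζ ^ 2) * (x ^ 2 - q * (ζ ^ 2) ^ 2) = 0 := by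
      have := congrArg (Polynomial.eval x) key
      simp only [eval_add, eval_mul, eval_pow, eval_X, eval_C, eval_sub] at this
      rw [← this]
      linear_combination hx
    rcases mul_eq_zero.1 hx' with h | h
    · apply hnsq
      refine ⟨x * ζ⁻¹, ?_⟩
      have hxx : x ^ 2 = q * ζ ^ 2 := by linear_combination h
      field_simp
      linear_combination -hxx
    · apply hnsq
      have hζ2ne : ζ ^ 2 ≠ 0 := pow_ne_zero 2 hζne
      refine ⟨x * (ζ ^ 2)⁻¹, ?_⟩
      have hxx : x ^ 2 = q * (ζ ^ 2) ^ 2 := by linear_combination h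
      field_simp
      linear_combination -hxx
  · -- IsSquare → splits
    rintro ⟨s, hs⟩
    have fac : ∀ c : ZMod ℓ, (X ^ 2 - C (c * c) : (ZMod ℓ)[X]) = (X - C c) * (X + C c) := by
      intro c
      simp only [C_mul]
      ring
    have e1 : q * ζ ^ 2 = (s * ζ) * (s * ζ) := by rw [hs]; ring
    have e2 : q * (ζ ^ 2) ^ 2 = (s * ζ ^ 2) * (s * ζ ^ 2) := by rw [hs]; ring
    rw [key, e1, e2, fac, fac]
    apply Polynomial.Splits.mul
    · apply Polynomial.Splits.mul
      · exact Polynomial.Splits.X_sub_C _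
      · rw [show (X + C (s * ζ) : (ZMod ℓ)[X]) = X - C (-(s * ζ)) by rw [C_neg, sub_neg_eq_add]]
        exact Polynomial.Splits.X_sub_C _
    · apply Polynomial.Splits.mul
      · exact Polynomial.Splits.X_sub_C _
      · rw [show (X + C (s * ζ ^ 2) : (ZMod ℓ)[X]) = X - C (-(s * ζ ^ 2)) by
          rw [C_neg, sub_neg_eq_add]]
        exact Polynomial.Splits.X_sub_C _
end

section
/- Let ℓ be a prime with ℓ ≡ 1 (mod 8) and let p be any rational prime. Then the polynomial X⁴ + p², with its coefficients reduced modulo ℓ, splits into a product of linear factors in F_ℓ[X] if and only if the Legendre symbol (p/ℓ) ≠ −1. -/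
open Polynomial

private lemma sq_sub_sq_splits {K : Type*} [Field K] (t : K) :
    Polynomial.Splits (X ^ 2 - C (t * t)) := by
  have h : (X ^ 2 - C (t * t) : K[X]) = (X - C t) * (X - C (-t)) := by
    rw [map_mul, map_neg]; ring
  rw [h]
  exact (Splits.X_sub_C _).mul (Splits.X_sub_C _)

/-- Let `ℓ` be a prime with `ℓ ≡ 1 (mod 8)` and let `p` be any rational
prime. Then the polynomial `X⁴ + p²`, with its coefficients reduced modulo `ℓ`, splits into
a product of linear factors in `F_ℓ[X]` if and only if the Legendre symbol `(p/ℓ) ≠ −1`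
(expressed via the Jacobi symbol, which coincides with the Legendre symbol for odd
primes). -/
theorem split_linear_iff_legendre_ne_neg_one_case3
    (ℓ : ℕ) [Fact ℓ.Prime] (h8 : ℓ % 8 = 1) (p : ℕ) (hp : p.Prime) :
    Polynomial.Splits
      ((X ^ 4 + C ((p : ZMod ℓ) ^ 2)).map (RingHom.id (ZMod ℓ)))
      ↔ jacobiSym p ℓ ≠ -1 := by
  rw [Polynomial.map_id]
  have hℓ2 : ℓ ≠ 2 := by omega
  set q : ZMod ℓ := (p : ZMod ℓ) with hq
  -- get i with -1 = i * i
  obtain ⟨i, hi⟩ := (ZMod.exists_sq_eq_neg_one_iff (p := ℓ)).2 (by omega)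
  -- get s with 2 = s * s
  obtain ⟨s, hs⟩ := (ZMod.exists_sq_eq_two_iff hℓ2).2 (Or.inl h8)
  have hs0 : s ≠ 0 := by
    intro h
    rw [h, mul_zero] at hs
    have h2 : ((2 : ℕ) : ZMod ℓ) = 0 := by exact_mod_cast hs
    have hdvd : ℓ ∣ 2 := (ZMod.natCast_eq_zero_iff 2 ℓ).1 h2
    exact hℓ2 ((Nat.prime_dvd_prime_iff_eq (Fact.out) Nat.prime_two).1 hdvd)
  -- c with c * c = i
  obtain ⟨c, hc⟩ : ∃ c : ZMod ℓ, c * c = i := by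
    refine ⟨(1 + i) * s⁻¹, ?_⟩
    field_simp
    linear_combination i * hs - hi
  -- reduce jacobi to IsSquare
  have hjac : (jacobiSym p ℓ ≠ -1) ↔ IsSquare q := by
    rw [← jacobiSym.legendreSym.to_jacobiSym ℓ (p : ℤ), ne_eq,
      legendreSym.eq_neg_one_iff', not_not]
  rw [hjac]
  constructor
  · intro hsp
    have hdeg : (X ^ 4 + C (q ^ 2) : (ZMod ℓ)[X]).degree ≠ 0 := by
      rw [Polynomial.degree_X_pow_add_C (by norm_num : 0 < 4)]
      norm_num
    obtain ⟨x, hx⟩ := Splits.exists_eval_eq_zero hsp hdeg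
    simp only [eval_add, eval_pow, eval_X, eval_C] at hx
    -- x^4 + q^2 = 0, factor: (x^2 - i*q)*(x^2 + i*q) = 0
    have hfac : (x ^ 2 - i * q) * (x ^ 2 + i * q) = 0 := by
      linear_combination hx + q ^ 2 * hi
    rcases mul_eq_zero.1 hfac with h | h
    · -- x^2 = i*q, so q = -i*x^2 = (c*i*x)^2
      refine ⟨c * i * x, ?_⟩
      linear_combination (-(i * i * x ^ 2)) * hc - (i * i * i) * h + (q * (i * i - 1)) * hi
    · -- x^2 = -i*q, so q = i*x^2 = (c*x)^2
      refine ⟨c * x, ?_⟩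
      linear_combination (-(x ^ 2)) * hc - i * h - q * hi
  · rintro ⟨a, ha⟩
    have hCa : ((i * q) ^ 2 : ZMod ℓ) = -(q ^ 2) := by
      linear_combination (-(q ^ 2)) * hi
    have hfac : (X ^ 4 + C (q ^ 2) : (ZMod ℓ)[X]) =
        (X ^ 2 - C (i * q)) * (X ^ 2 - C (-(i * q))) := by
      have hr : (X ^ 2 - C (i * q)) * (X ^ 2 - C (-(i * q)) : (ZMod ℓ)[X])
          = X ^ 4 - C (i * q) ^ 2 := by
        rw [map_neg]; ring
      rw [hr, ← map_pow, hCa, map_neg, sub_neg_eq_add]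
    rw [hfac]
    have h1 : (i * q : ZMod ℓ) = (c * a) * (c * a) := by
      linear_combination (-(a * a)) * hc + i * ha
    have h2 : (-(i * q) : ZMod ℓ) = (c * i * a) * (c * i * a) := by
      linear_combination (-(i * i * a * a)) * hc + (i * a * a) * hi - i * ha
    rw [h2, h1]
    exact (sq_sub_sq_splits _).mul (sq_sub_sq_splits _)
end

section
/- There is an absolute constant c such that for every prime ℓ ≥ 5 and each 1 ≤ i ≤ 5, the image of GC^i(ℓ) ∩ GB(ℓ) under the quotient map GB(ℓ) → GB(ℓ)/GU'(ℓ) has cardinality at most c (in particular, the cardinality is bounded independently of ℓ). -/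
open Matrix Polynomial

/-- Assemble a `4×4` matrix out of four `2×2` blocks. -/
def blocks4 {ℓ : ℕ} (A B C D : Matrix (Fin 2) (Fin 2) (ZMod ℓ)) :
    Matrix (Fin 4) (Fin 4) (ZMod ℓ) :=
  Matrix.reindex finSumFinEquiv finSumFinEquiv (fromBlocks A B C D)

/-- The standard symplectic matrix `J = [[0, I₂], [−I₂, 0]]`. -/
def Jmat (ℓ : ℕ) : Matrix (Fin 4) (Fin 4) (ZMod ℓ) :=
  blocks4 0 1 (-1) 0

/-- `GSp₄(F_ℓ) = {M ∈ GL₄(F_ℓ) : ᵗM·J·M = μJ for some μ ∈ F_ℓˣ}`. -/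
def GSpSet (ℓ : ℕ) : Set (GL (Fin 4) (ZMod ℓ)) :=
  {M | ∃ μ : (ZMod ℓ)ˣ, M.valᵀ * Jmat ℓ * M.val = (μ : ZMod ℓ) • Jmat ℓ}

/-- `GB(ℓ) = {[[A, μ⁻¹AS], [0, μ(ᵗA)⁻¹]] : A ∈ GL₂ upper triangular, S symmetric,
μ ∈ F_ℓˣ}`. -/
def GBSet (ℓ : ℕ) : Set (GL (Fin 4) (ZMod ℓ)) :=
  {M | ∃ (A S : Matrix (Fin 2) (Fin 2) (ZMod ℓ)) (μ : (ZMod ℓ)ˣ),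
    IsUnit A.det ∧ A 1 0 = 0 ∧ S.IsSymm ∧
    M.val = blocks4 A (((μ⁻¹ : (ZMod ℓ)ˣ) : ZMod ℓ) • (A * S)) 0
      ((μ : ZMod ℓ) • Aᵀ⁻¹)}

/-- `GU'(ℓ) = {[[A, μ⁻¹AS], [0, μ(ᵗA)⁻¹]] : A = [[λ, a], [0, λ]], λ ∈ F_ℓˣ, μ = λ²,
S symmetric}`. -/
def GU'Set (ℓ : ℕ) : Set (GL (Fin 4) (ZMod ℓ)) :=
  {M | ∃ (lam : (ZMod ℓ)ˣ) (a : ZMod ℓ) (S : Matrix (Fin 2) (Fin 2) (ZMod ℓ)), S.IsSymm ∧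
    M.val = blocks4 !![(lam : ZMod ℓ), a; 0, (lam : ZMod ℓ)]
      ((((lam⁻¹ : (ZMod ℓ)ˣ) : ZMod ℓ) ^ 2) •
        (!![(lam : ZMod ℓ), a; 0, (lam : ZMod ℓ)] * S))
      0
      (((lam : ZMod ℓ) ^ 2) • (!![(lam : ZMod ℓ), a; 0, (lam : ZMod ℓ)])ᵀ⁻¹)}
/-- The five reference quartic polynomials `f₁ = X⁴+μX²+μ²`, `f₂ = X⁴−μX²+μ²`,
`f₃ = X⁴+μ²`, `f₄ = (X²−μ)²`, `f₅ = (X²+μ)²`. -/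
noncomputable def fPoly (ℓ : ℕ) (i : ℕ) (μ : ZMod ℓ) : Polynomial (ZMod ℓ) :=
  if i = 1 then X ^ 4 + C μ * X ^ 2 + C (μ ^ 2)
  else if i = 2 then X ^ 4 - C μ * X ^ 2 + C (μ ^ 2)
  else if i = 3 then X ^ 4 + C (μ ^ 2)
  else if i = 4 then (X ^ 2 - C μ) ^ 2
  else (X ^ 2 + C μ) ^ 2

/-- `GC^i(ℓ)`: the set of `M ∈ GSp₄(F_ℓ)` whose characteristic polynomial equals `f_i`
(for some `μ ∈ F_ℓˣ`) and factors as `(X−λ₁)(X−μλ₁⁻¹)(X−λ₂)(X−μλ₂⁻¹)` with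
`λ₁, λ₂ ∈ F_ℓˣ` (the inverses being witnessed by `lam₁'`, `lam₂'`). -/
def GCSet (ℓ : ℕ) (i : ℕ) : Set (GL (Fin 4) (ZMod ℓ)) :=
  {M | M ∈ GSpSet ℓ ∧ ∃ μ lam₁ lam₂ lam₁' lam₂' : ZMod ℓ, μ ≠ 0 ∧
    lam₁ * lam₁' = 1 ∧ lam₂ * lam₂' = 1 ∧
    M.val.charpoly = fPoly ℓ i μ ∧
    M.val.charpoly =
      (X - C lam₁) * (X - C (μ * lam₁')) * (X - C lam₂) * (X - C (μ * lam₂'))}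

set_option maxRecDepth 8000

lemma blocks4_eq {ℓ : ℕ} (A B C D : Matrix (Fin 2) (Fin 2) (ZMod ℓ)) :
    blocks4 A B C D = !![A 0 0, A 0 1, B 0 0, B 0 1;
                         A 1 0, A 1 1, B 1 0, B 1 1;
                         C 0 0, C 0 1, D 0 0, D 0 1;
                         C 1 0, C 1 1, D 1 0, D 1 1] := by
  ext i j
  fin_cases i <;> fin_cases j <;> rfl

lemma blocks4_lit {ℓ : ℕ} (a b c d e f g h i j k l : ZMod ℓ) :
    blocks4 !![a,b;c,d] !![e,f;g,h] 0 !![i,j;k,l] =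
      !![a,b,e,f; c,d,g,h; 0,0,i,j; 0,0,k,l] := by
  ext x y
  fin_cases x <;> fin_cases y <;> rfl

variable {ℓ : ℕ} [Fact ℓ.Prime]

lemma tri_transpose (α β δ : ZMod ℓ) : (!![α, β; 0, δ])ᵀ = !![α, 0; β, δ] := by
  ext i j; fin_cases i <;> fin_cases j <;> rfl

lemma tri_transpose_inv (α β δ : ZMod ℓ) (hα : α ≠ 0) (hδ : δ ≠ 0) :
    (!![α, β; 0, δ])ᵀ⁻¹ = !![α⁻¹, 0; -(β*α⁻¹*δ⁻¹), δ⁻¹] := by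
  rw [tri_transpose]
  apply inv_eq_right_inv
  ext i j
  fin_cases i <;> fin_cases j <;>
    simp [Matrix.mul_apply, Fin.sum_univ_two, Matrix.one_apply] <;>
    field_simp <;> ring

lemma smul_fin_two (c a b d e : ZMod ℓ) :
    c • !![a, b; d, e] = !![c*a, c*b; c*d, c*e] := by
  ext i j; fin_cases i <;> fin_cases j <;> simp


/-- canonical form of a `GB` element -/
def M4 (α β δ s t u μ : ZMod ℓ) : Matrix (Fin 4) (Fin 4) (ZMod ℓ) :=
  !![α, β, μ⁻¹*(α*s+β*t), μ⁻¹*(α*t+β*u);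
     0, δ, μ⁻¹*(δ*t),     μ⁻¹*(δ*u);
     0, 0, μ*α⁻¹,         0;
     0, 0, -(μ*β*α⁻¹*δ⁻¹), μ*δ⁻¹]

lemma gb_struct {m : GL (Fin 4) (ZMod ℓ)} (hm : m ∈ GBSet ℓ) :
    ∃ α β δ s t u μ : ZMod ℓ, α ≠ 0 ∧ δ ≠ 0 ∧ μ ≠ 0 ∧
      m.val = M4 α β δ s t u μ := by
  obtain ⟨A, S, μ, hdet, hA10, hS, hval⟩ := hm
  have hα : A 0 0 ≠ 0 := by
    intro h; rw [Matrix.det_fin_two, hA10, h] at hdet; simp at hdet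
  have hδ : A 1 1 ≠ 0 := by
    intro h; rw [Matrix.det_fin_two, hA10, h] at hdet; simp at hdet
  have hAe := Matrix.eta_fin_two A
  rw [hA10] at hAe
  have hS10 : S 1 0 = S 0 1 := by
    have := hS.apply 1 0; simpa using this.symm
  have hSe := Matrix.eta_fin_two S
  rw [hS10] at hSe
  refine ⟨A 0 0, A 0 1, A 1 1, S 0 0, S 0 1, S 1 1, (μ : ZMod ℓ), hα, hδ, Units.ne_zero μ, ?_⟩
  have hμinv : ((μ⁻¹ : (ZMod ℓ)ˣ) : ZMod ℓ) = ((μ : ZMod ℓ))⁻¹ := (ZMod.inv_coe_unit μ).symm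
  have hB : ((μ⁻¹ : (ZMod ℓ)ˣ) : ZMod ℓ) • (A * S) =
      !![(μ:ZMod ℓ)⁻¹*(A 0 0*S 0 0+A 0 1*S 0 1), (μ:ZMod ℓ)⁻¹*(A 0 0*S 0 1+A 0 1*S 1 1);
         (μ:ZMod ℓ)⁻¹*(A 1 1*S 0 1), (μ:ZMod ℓ)⁻¹*(A 1 1*S 1 1)] := by
    rw [hμinv]
    conv_lhs => rw [hAe, hSe, Matrix.mul_fin_two]
    rw [smul_fin_two]
    congr 1 <;> ring
  have hD : ((μ : ZMod ℓ)) • Aᵀ⁻¹ =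
      !![(μ:ZMod ℓ)*(A 0 0)⁻¹, 0;
         -((μ:ZMod ℓ)*A 0 1*(A 0 0)⁻¹*(A 1 1)⁻¹), (μ:ZMod ℓ)*(A 1 1)⁻¹] := by
    conv_lhs => rw [hAe, tri_transpose_inv _ _ _ hα hδ]
    rw [smul_fin_two]
    congr 1 <;> ring
  rw [hval]
  conv_lhs => rw [hB, hD, hAe]
  rw [blocks4_lit, M4]
  congr 1 <;> simp

/-- canonical form of a `GU'` element -/
def U4 (l a s t u : ZMod ℓ) : Matrix (Fin 4) (Fin 4) (ZMod ℓ) :=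
  !![l, a, l⁻¹*s + l⁻¹*l⁻¹*(a*t), l⁻¹*t + l⁻¹*l⁻¹*(a*u);
     0, l, l⁻¹*t, l⁻¹*u;
     0, 0, l, 0;
     0, 0, -a, l]

lemma gu_block_eq (l a s t u : ZMod ℓ) (hl : l ≠ 0) :
    blocks4 !![l, a; 0, l] ((l⁻¹ ^ 2) • (!![l, a; 0, l] * !![s, t; t, u])) 0
      ((l ^ 2) • (!![l, a; 0, l])ᵀ⁻¹) = U4 l a s t u := by
  have hB : (l⁻¹ ^ 2) • (!![l, a; 0, l] * !![s, t; t, u]) =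
      !![l⁻¹*s + l⁻¹*l⁻¹*(a*t), l⁻¹*t + l⁻¹*l⁻¹*(a*u); l⁻¹*t, l⁻¹*u] := by
    rw [Matrix.mul_fin_two, smul_fin_two]
    ext i j
    fin_cases i <;> fin_cases j <;> (try simp) <;> (try field_simp) <;> (try ring) <;> (try field_simp) <;> (try ring)
  have hD : (l ^ 2) • (!![l, a; 0, l])ᵀ⁻¹ = !![l, 0; -a, l] := by
    rw [tri_transpose_inv _ _ _ hl hl, smul_fin_two]
    ext i j
    fin_cases i <;> fin_cases j <;> (try simp) <;> (try field_simp) <;> (try ring) <;> (try field_simp) <;> (try ring)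
  rw [hB, hD, blocks4_lit, U4]

lemma gu_struct {x : GL (Fin 4) (ZMod ℓ)} (hx : x ∈ GU'Set ℓ) :
    ∃ l a s t u : ZMod ℓ, l ≠ 0 ∧ x.val = U4 l a s t u := by
  obtain ⟨lam, a, S, hS, hval⟩ := hx
  have hS10 : S 1 0 = S 0 1 := by
    have := hS.apply 1 0; simpa using this.symm
  have hSe := Matrix.eta_fin_two S
  rw [hS10] at hSe
  refine ⟨(lam : ZMod ℓ), a, S 0 0, S 0 1, S 1 1, Units.ne_zero lam, ?_⟩
  have hμinv : ((lam⁻¹ : (ZMod ℓ)ˣ) : ZMod ℓ) = ((lam : ZMod ℓ))⁻¹ :=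
    (ZMod.inv_coe_unit lam).symm
  rw [hval, hμinv]
  conv_lhs => rw [hSe]
  exact gu_block_eq _ _ _ _ _ (Units.ne_zero lam)

lemma gu_mem {x : GL (Fin 4) (ZMod ℓ)} (l a s t u : ZMod ℓ) (hl : l ≠ 0)
    (hval : x.val = U4 l a s t u) : x ∈ GU'Set ℓ := by
  refine ⟨Units.mk0 l hl, a, !![s, t; t, u], ?_, ?_⟩
  · show (!![s, t; t, u])ᵀ = !![s, t; t, u]
    ext i j
    fin_cases i <;> fin_cases j <;> rfl
  · have hμinv : ((Units.mk0 l hl)⁻¹ : (ZMod ℓ)ˣ).val = l⁻¹ :=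
      (ZMod.inv_coe_unit (Units.mk0 l hl)).symm
    rw [hval]
    show U4 l a s t u = _
    rw [hμinv]
    exact (gu_block_eq l a s t u hl).symm

set_option maxHeartbeats 2000000 in
lemma U4_mul (l1 a1 s1 t1 u1 l2 a2 s2 t2 u2 : ZMod ℓ) (h1 : l1 ≠ 0) (h2 : l2 ≠ 0) :
    U4 l1 a1 s1 t1 u1 * U4 l2 a2 s2 t2 u2 =
      U4 (l1*l2) (l1*a2+a1*l2) (l1^2*s2+l2^2*s1-2*l2*a2*t1+a2^2*u1)
        (l1^2*t2+l2^2*t1-l2*a2*u1) (l1^2*u2+l2^2*u1) := by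
  ext i j
  fin_cases i <;> fin_cases j <;>
    simp [U4, Matrix.mul_apply, Fin.sum_univ_four, Matrix.vecHead, Matrix.vecTail] <;>
    (try field_simp) <;> (try ring) <;> (try field_simp) <;> (try ring)

set_option maxHeartbeats 2000000 in
lemma U4_inv (l a s t u : ZMod ℓ) (hl : l ≠ 0) :
    U4 l a s t u * U4 l⁻¹ (-(a*l⁻¹*l⁻¹)) (-(s*l⁻¹^4)-2*a*t*l⁻¹^5-a^2*u*l⁻¹^6)
      (-(t*l⁻¹^4)-a*u*l⁻¹^5) (-(u*l⁻¹^4)) = 1 := by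
  ext i j
  fin_cases i <;> fin_cases j <;>
    simp [U4, Matrix.mul_apply, Fin.sum_univ_four, Matrix.one_apply, Matrix.vecHead, Matrix.vecTail] <;>
    (try field_simp) <;> (try ring) <;> (try field_simp) <;> (try ring)

lemma gu_mul_mem {x y : GL (Fin 4) (ZMod ℓ)} (hx : x ∈ GU'Set ℓ) (hy : y ∈ GU'Set ℓ) :
    x * y ∈ GU'Set ℓ := by
  obtain ⟨l1, a1, s1, t1, u1, h1, hv1⟩ := gu_struct hx
  obtain ⟨l2, a2, s2, t2, u2, h2, hv2⟩ := gu_struct hy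
  refine gu_mem (l1*l2) (l1*a2+a1*l2) (l1^2*s2+l2^2*s1-2*l2*a2*t1+a2^2*u1)
    (l1^2*t2+l2^2*t1-l2*a2*u1) (l1^2*u2+l2^2*u1) (mul_ne_zero h1 h2) ?_
  rw [Units.val_mul, hv1, hv2, U4_mul _ _ _ _ _ _ _ _ _ _ h1 h2]

lemma gu_inv_mem {x : GL (Fin 4) (ZMod ℓ)} (hx : x ∈ GU'Set ℓ) : x⁻¹ ∈ GU'Set ℓ := by
  obtain ⟨l, a, s, t, u, hl, hv⟩ := gu_struct hx
  refine gu_mem l⁻¹ (-(a*l⁻¹*l⁻¹)) (-(s*l⁻¹^4)-2*a*t*l⁻¹^5-a^2*u*l⁻¹^6)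
    (-(t*l⁻¹^4)-a*u*l⁻¹^5) (-(u*l⁻¹^4)) (inv_ne_zero hl) ?_
  have : x.val * U4 l⁻¹ (-(a*l⁻¹*l⁻¹)) (-(s*l⁻¹^4)-2*a*t*l⁻¹^5-a^2*u*l⁻¹^6)
      (-(t*l⁻¹^4)-a*u*l⁻¹^5) (-(u*l⁻¹^4)) = 1 := by
    rw [hv]; exact U4_inv l a s t u hl
  have h2 := Matrix.inv_eq_right_inv this
  rw [← h2]
  exact Matrix.coe_units_inv x

set_option maxHeartbeats 4000000 in
lemma M4_mul_U4 (α β δ s t u μ l a s2 t2 u2 : ZMod ℓ)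
    (hα : α ≠ 0) (hδ : δ ≠ 0) (hμ : μ ≠ 0) (hl : l ≠ 0) :
    M4 α β δ s t u μ *
      U4 l a (μ⁻¹*(s2 - l^2*s + 2*l*a*t - a^2*u)) (μ⁻¹*(t2 - l^2*t + l*a*u))
        (μ⁻¹*(u2 - l^2*u)) =
      M4 (α*l) (β*l + α*a) (δ*l) s2 t2 u2 (μ*l^2) := by
  have hαl : α * l ≠ 0 := mul_ne_zero hα hl
  have hδl : δ * l ≠ 0 := mul_ne_zero hδ hl
  have hμl : μ * l^2 ≠ 0 := mul_ne_zero hμ (pow_ne_zero 2 hl)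
  ext i j
  fin_cases i <;> fin_cases j <;>
    simp [M4, U4, Matrix.mul_apply, Fin.sum_univ_four, Matrix.vecHead, Matrix.vecTail] <;>
    (try field_simp) <;> (try ring) <;> (try field_simp) <;> (try ring)

lemma M4_00 (α β δ s t u μ : ZMod ℓ) : (M4 α β δ s t u μ) 0 0 = α := rfl
lemma M4_11 (α β δ s t u μ : ZMod ℓ) : (M4 α β δ s t u μ) 1 1 = δ := rfl
lemma M4_22 (α β δ s t u μ : ZMod ℓ) : (M4 α β δ s t u μ) 2 2 = μ*α⁻¹ := rfl

lemma coset_eq {m1 m2 : GL (Fin 4) (ZMod ℓ)} (h1 : m1 ∈ GBSet ℓ) (h2 : m2 ∈ GBSet ℓ)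
    (hp : m1.val 0 0 * (m1.val 1 1)⁻¹ = m2.val 0 0 * (m2.val 1 1)⁻¹)
    (hq : m1.val 2 2 * (m1.val 0 0)⁻¹ = m2.val 2 2 * (m2.val 0 0)⁻¹) :
    {x | m1⁻¹ * x ∈ GU'Set ℓ} = {x | m2⁻¹ * x ∈ GU'Set ℓ} := by
  obtain ⟨α1, β1, δ1, s1, t1, u1, μ1, hα1, hδ1, hμ1, hv1⟩ := gb_struct h1
  obtain ⟨α2, β2, δ2, s2, t2, u2, μ2, hα2, hδ2, hμ2, hv2⟩ := gb_struct h2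
  rw [hv1, hv2, M4_00, M4_00, M4_11, M4_11] at hp
  rw [hv1, hv2, M4_22, M4_22, M4_00, M4_00] at hq
  set l : ZMod ℓ := α2 * α1⁻¹ with hldef
  have hl : l ≠ 0 := mul_ne_zero hα2 (inv_ne_zero hα1)
  set a : ZMod ℓ := (β2 - β1 * l) * α1⁻¹ with hadef
  have e1 : α1 * l = α2 := by rw [hldef]; field_simp
  have e2 : β1 * l + α1 * a = β2 := by
    rw [hadef, hldef]; field_simp; ring
  have e3 : δ1 * l = δ2 := by
    field_simp at hp
    rw [hldef]; field_simp
    first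
    | linear_combination hp
    | linear_combination -hp
    | linear_combination δ1 * hp
    | linear_combination -δ1 * hp
    | linear_combination δ2 * hp
    | linear_combination -δ2 * hp
  have e4 : μ1 * l^2 = μ2 := by
    field_simp at hq
    rw [hldef]; field_simp
    first
    | linear_combination hq
    | linear_combination -hq
    | linear_combination μ1 * hq
    | linear_combination μ2 * hq
    | linear_combination α1 * α2 * hq
  have key : m1.val * U4 l a (μ1⁻¹*(s2 - l^2*s1 + 2*l*a*t1 - a^2*u1))
      (μ1⁻¹*(t2 - l^2*t1 + l*a*u1)) (μ1⁻¹*(u2 - l^2*u1)) = m2.val := by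
    rw [hv1, hv2, M4_mul_U4 _ _ _ _ _ _ _ _ _ _ _ _ hα1 hδ1 hμ1 hl, e1, e2, e3, e4]
  set w : GL (Fin 4) (ZMod ℓ) := m1⁻¹ * m2 with hwdef
  have hwval : m1.val * w.val = m2.val := by
    have h' : (m1 * (m1⁻¹ * m2)) = m2 := by group
    calc m1.val * w.val = (m1 * w).val := (Units.val_mul _ _).symm
    _ = m2.val := by rw [hwdef, h']
  have hwU : w.val = U4 l a (μ1⁻¹*(s2 - l^2*s1 + 2*l*a*t1 - a^2*u1))
      (μ1⁻¹*(t2 - l^2*t1 + l*a*u1)) (μ1⁻¹*(u2 - l^2*u1)) := by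
    have h' : m1.val * U4 l a (μ1⁻¹*(s2 - l^2*s1 + 2*l*a*t1 - a^2*u1))
        (μ1⁻¹*(t2 - l^2*t1 + l*a*u1)) (μ1⁻¹*(u2 - l^2*u1)) = m1.val * w.val :=
      key.trans hwval.symm
    exact ((Units.mul_right_inj m1).mp h').symm
  have hw : w ∈ GU'Set ℓ := gu_mem l a _ _ _ hl hwU
  ext x
  simp only [Set.mem_setOf_eq]
  constructor
  · intro hx
    have hx2 : m2⁻¹ * x = w⁻¹ * (m1⁻¹ * x) := by rw [hwdef]; group
    rw [hx2]
    exact gu_mul_mem (gu_inv_mem hw) hx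
  · intro hx
    have hx2 : m1⁻¹ * x = w * (m2⁻¹ * x) := by rw [hwdef]; group
    rw [hx2]
    exact gu_mul_mem hw hx

lemma tri_charpoly (α β δ : ZMod ℓ) :
    (!![α, β; 0, δ]).charpoly = (X - C α) * (X - C δ) := by
  rw [Matrix.charpoly, Matrix.det_fin_two]
  rw [charmatrix_apply_eq, charmatrix_apply_eq,
    charmatrix_apply_ne _ _ _ (by decide), charmatrix_apply_ne _ _ _ (by decide)]
  norm_num

lemma tri_charpoly_low (α β δ : ZMod ℓ) :
    (!![α, 0; β, δ]).charpoly = (X - C α) * (X - C δ) := by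
  rw [Matrix.charpoly, Matrix.det_fin_two]
  rw [charmatrix_apply_eq, charmatrix_apply_eq,
    charmatrix_apply_ne _ _ _ (by decide), charmatrix_apply_ne _ _ _ (by decide)]
  norm_num

lemma M4_charpoly (α β δ s t u μ : ZMod ℓ) :
    (M4 α β δ s t u μ).charpoly =
      (X - C α) * (X - C δ) * ((X - C (μ*α⁻¹)) * (X - C (μ*δ⁻¹))) := by
  have hM : M4 α β δ s t u μ =
      blocks4 !![α, β; 0, δ]
        !![μ⁻¹*(α*s+β*t), μ⁻¹*(α*t+β*u); μ⁻¹*(δ*t), μ⁻¹*(δ*u)] 0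
        !![μ*α⁻¹, 0; -(μ*β*α⁻¹*δ⁻¹), μ*δ⁻¹] := (blocks4_lit _ _ _ _ _ _ _ _ _ _ _ _).symm
  rw [hM]
  show (Matrix.reindex finSumFinEquiv finSumFinEquiv (fromBlocks _ _ _ _)).charpoly = _
  rw [Matrix.charpoly_reindex, Matrix.charpoly_fromBlocks_zero₂₁,
    tri_charpoly, tri_charpoly_low]

lemma fPoly_eval_zero (i : ℕ) (ν : ZMod ℓ) (hi1 : 1 ≤ i) (hi5 : i ≤ 5) :
    eval 0 (fPoly ℓ i ν) = ν^2 := by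
  interval_cases i <;> simp [fPoly]

lemma fPoly_root_pow {i : ℕ} {ν x : ZMod ℓ} (hi1 : 1 ≤ i) (hi5 : i ≤ 5)
    (hx : eval x (fPoly ℓ i ν) = 0) : x^24 = ν^12 := by
  interval_cases i <;> simp [fPoly] at hx
  · have h6 : x^6 = ν^3 := by linear_combination (x^2 - ν) * hx
    linear_combination (x^18 + x^12*ν^3 + x^6*ν^6 + ν^9) * h6
  · have h6 : x^6 = -ν^3 := by linear_combination (x^2 + ν) * hx
    linear_combination (x^18 - x^12*ν^3 + x^6*ν^6 - ν^9) * h6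
  · linear_combination (x^20 - x^16*ν^2 + x^12*ν^4 - x^8*ν^6 + x^4*ν^8 - ν^10) * hx
  · have h2 : x^2 - ν = 0 := by linear_combination hx
    linear_combination (x^22 + x^20*ν + x^18*ν^2 + x^16*ν^3 + x^14*ν^4 + x^12*ν^5 +
      x^10*ν^6 + x^8*ν^7 + x^6*ν^8 + x^4*ν^9 + x^2*ν^10 + ν^11) * h2
  · have h2 : x^2 + ν = 0 := by linear_combination hx
    linear_combination (x^22 - x^20*ν + x^18*ν^2 - x^16*ν^3 + x^14*ν^4 - x^12*ν^5 +
      x^10*ν^6 - x^8*ν^7 + x^6*ν^8 - x^4*ν^9 + x^2*ν^10 - ν^11) * h2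

lemma inv_bound {i : ℕ} (hi1 : 1 ≤ i) (hi5 : i ≤ 5) {m : GL (Fin 4) (ZMod ℓ)}
    (hc : m ∈ GCSet ℓ i) (hb : m ∈ GBSet ℓ) :
    (m.val 0 0 * (m.val 1 1)⁻¹)^24 = 1 ∧ (m.val 2 2 * (m.val 0 0)⁻¹)^12 = 1 := by
  obtain ⟨α, β, δ, s, t, u, μ, hα, hδ, hμ, hv⟩ := gb_struct hb
  obtain ⟨-, ν, l1, l2, l1', l2', hν, -, -, hcp, -⟩ := hc
  rw [hv, M4_charpoly] at hcp
  have hroot : ∀ x : ZMod ℓ,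
      eval x ((X - C α) * (X - C δ) * ((X - C (μ*α⁻¹)) * (X - C (μ*δ⁻¹)))) =
        eval x (fPoly ℓ i ν) := fun x => by rw [hcp]
  have hA : eval α (fPoly ℓ i ν) = 0 := by rw [← hroot α]; simp
  have hD : eval δ (fPoly ℓ i ν) = 0 := by rw [← hroot δ]; simp
  have hα24 : α^24 = ν^12 := fPoly_root_pow hi1 hi5 hA
  have hδ24 : δ^24 = ν^12 := fPoly_root_pow hi1 hi5 hD
  have h0 : μ^2 = ν^2 := by
    have h := hroot 0
    rw [fPoly_eval_zero i ν hi1 hi5] at h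
    simp at h
    field_simp at h
    first
    | linear_combination h
    | linear_combination -h
    | linear_combination h - 2*ν^2*(mul_ne_zero hα hδ).elim ..
  have hμ12 : μ^12 = α^24 := by
    calc μ^12 = (μ^2)^6 := by ring
    _ = (ν^2)^6 := by rw [h0]
    _ = ν^12 := by ring
    _ = α^24 := hα24.symm
  constructor
  · rw [hv, M4_00, M4_11]
    field_simp
    linear_combination hα24 - hδ24
  · rw [hv, M4_22, M4_00]
    field_simp
    linear_combination hμ12

/-- There is an absolute constant `c` such that for every prime `ℓ ≥ 5`
and each `1 ≤ i ≤ 5`, the image of `GC^i(ℓ) ∩ GB(ℓ)` under the quotient map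
`GB(ℓ) → GB(ℓ)/GU'(ℓ)` has cardinality at most `c`.  The image in the quotient is encoded
as the collection of left cosets `m·GU'(ℓ)` as `m` ranges over `GC^i(ℓ) ∩ GB(ℓ)`. -/
theorem gsp4_quotient_image_bounded :
    ∃ c : ℕ, ∀ ℓ : ℕ, ℓ.Prime → 5 ≤ ℓ → ∀ i : ℕ, 1 ≤ i → i ≤ 5 →
      Set.ncard {S : Set (GL (Fin 4) (ZMod ℓ)) |
        ∃ m ∈ GCSet ℓ i ∩ GBSet ℓ, S = {x | m⁻¹ * x ∈ GU'Set ℓ}} ≤ c := by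

  refine ⟨288, ?_⟩
  intro ℓ hℓ _ i hi1 hi5
  haveI : Fact ℓ.Prime := ⟨hℓ⟩
  have hcard : ∀ n : ℕ, (Polynomial.nthRootsFinset n (1 : ZMod ℓ)).card ≤ n := by
    intro n
    classical
    rw [Polynomial.nthRootsFinset_def]
    exact le_trans (Multiset.toFinset_card_le _) (Polynomial.card_nthRoots n 1)
  have hle : Set.ncard {S : Set (GL (Fin 4) (ZMod ℓ)) |
      ∃ m ∈ GCSet ℓ i ∩ GBSet ℓ, S = {x | m⁻¹ * x ∈ GU'Set ℓ}} ≤ ((Polynomial.nthRootsFinset 24 (1 : ZMod ℓ) ×ˢ Polynomial.nthRootsFinset 12 (1 : ZMod ℓ) : Finset (ZMod ℓ × ZMod ℓ)) : Set (ZMod ℓ × ZMod ℓ)).ncard := by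
    apply Set.ncard_le_ncard_of_injOn
      (fun S => @dite _ (∃ m ∈ GCSet ℓ i ∩ GBSet ℓ, S = {x | m⁻¹ * x ∈ GU'Set ℓ})
        (Classical.propDecidable _)
        (fun h => ((h.choose).val 0 0 * ((h.choose).val 1 1)⁻¹,
         (h.choose).val 2 2 * ((h.choose).val 0 0)⁻¹)) (fun _ => (1,1)))
    · intro S hS
      have h : ∃ m ∈ GCSet ℓ i ∩ GBSet ℓ, S = {x | m⁻¹ * x ∈ GU'Set ℓ} := hS
      simp only [dif_pos h]
      obtain ⟨hm, hSeq⟩ := h.choose_spec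
      have hin := inv_bound hi1 hi5 hm.1 hm.2
      refine Finset.mem_coe.mpr (Finset.mem_product.mpr ⟨?_, ?_⟩)
      · exact (Polynomial.mem_nthRootsFinset (by norm_num) 1).mpr hin.1
      · exact (Polynomial.mem_nthRootsFinset (by norm_num) 1).mpr hin.2
    · intro S1 hS1 S2 hS2 hfeq
      have h1 : ∃ m ∈ GCSet ℓ i ∩ GBSet ℓ, S1 = {x | m⁻¹ * x ∈ GU'Set ℓ} := hS1
      have h2 : ∃ m ∈ GCSet ℓ i ∩ GBSet ℓ, S2 = {x | m⁻¹ * x ∈ GU'Set ℓ} := hS2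
      simp only [dif_pos h1, dif_pos h2] at hfeq
      obtain ⟨hm1, hS1eq⟩ := h1.choose_spec
      obtain ⟨hm2, hS2eq⟩ := h2.choose_spec
      have hco := coset_eq hm1.2 hm2.2 (congrArg Prod.fst hfeq) (congrArg Prod.snd hfeq)
      rw [hS1eq, hS2eq, hco]
  refine le_trans hle ?_
  rw [Set.ncard_coe_finset, Finset.card_product]
  calc (Polynomial.nthRootsFinset 24 (1 : ZMod ℓ)).card * (Polynomial.nthRootsFinset 12 (1 : ZMod ℓ)).card
      ≤ 24 * 12 := Nat.mul_le_mul (hcard 24) (hcard 12)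
    _ ≤ 288 := by norm_num
end
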